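/- Let f : ℕ → {−1,1} be multiplicative with f(3) = 1, D(1,f;∞) < ∞, and f(2^j) = −1 for all j ≥ 1; write f = 1 * g. Then for every odd positive integer a, G(a) ≤ 0, where G(a) = ∏_{p^k || a} ( g(p^k)² + 2 ∑_{i > k} g(p^k)g(p^i)/p^{i−k} ). In particular the only possibly-negative Euler factor E_p is E_2, and each factor with p ≥ 3 is nonnegative. -/

import Mathlib

open Finset

lemma geo_aux {a : ℕ → ℝ} {C r : ℝ} (hr0 : 0 ≤ r) (hr1 : r < 1)
    (h : ∀ i, |a i| ≤ C * r ^ (i + 1)) :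
    Summable a ∧ |∑' i, a i| ≤ C * r / (1 - r) := by
  have hb : Summable (fun i : ℕ => C * r ^ (i + 1)) := by
    have := (summable_geometric_of_lt_one hr0 hr1).mul_left (C * r)
    refine this.congr fun i => ?_
    ring
  have habs : Summable (fun i => |a i|) :=
    Summable.of_nonneg_of_le (fun i => abs_nonneg _) h hb
  have hsa : Summable a := habs.of_abs
  refine ⟨hsa, ?_⟩
  have h1 : |∑' i, a i| ≤ ∑' i, |a i| := by
    have := norm_tsum_le_tsum_norm (f := a) (by simpa [Real.norm_eq_abs] using habs)
    simpa [Real.norm_eq_abs] using this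
  have h2 : ∑' i, |a i| ≤ ∑' i, C * r ^ (i + 1) := Summable.tsum_le_tsum h habs hb
  have h3 : ∑' i : ℕ, C * r ^ (i + 1) = C * r / (1 - r) := by
    have : ∑' i : ℕ, C * r ^ (i + 1) = ∑' i : ℕ, (C * r) * r ^ i := by
      congr 1; ext i; ring
    rw [this, tsum_mul_left, tsum_geometric_of_lt_one hr0 hr1]
    field_simp
  linarith

theorem euler_factors_nonneg_of_f_three_eq_one
    (f g G : ℕ → ℝ) (hf1 : f 1 = 1)
    (hfmul : ∀ a b : ℕ, Nat.Coprime a b → f (a * b) = f a * f b)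
    (hrange : ∀ n : ℕ, 1 ≤ n → f n = 1 ∨ f n = -1)
    (hf3 : f 3 = 1)
    (h2 : ∀ j : ℕ, 1 ≤ j → f (2 ^ j) = -1)
    (hpret : Summable (fun p : Nat.Primes => (1 - f p) / (p : ℝ)))
    (hg : ∀ p k : ℕ, p.Prime → 1 ≤ k → g (p ^ k) = f (p ^ k) - f (p ^ (k - 1)))
    (hG : ∀ a : ℕ, G a = ∏ p ∈ a.primeFactors,
      (g (p ^ (a.factorization p)) ^ 2 +
        2 * ∑' i : ℕ, g (p ^ (a.factorization p)) *
          g (p ^ (a.factorization p + i + 1)) / (p : ℝ) ^ (i + 1))) :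
    (∀ p k : ℕ, p.Prime → 3 ≤ p →
      (k = 0 → 0 ≤ 1 + 2 * ∑' i : ℕ, g (p ^ (i + 1)) / (p : ℝ) ^ (i + 1)) ∧
      (1 ≤ k → 0 ≤ g (p ^ k) ^ 2 +
        2 * ∑' i : ℕ, g (p ^ k) * g (p ^ (k + i + 1)) / (p : ℝ) ^ (i + 1))) ∧
    (∀ a : ℕ, 1 ≤ a → Odd a → 0 ≤ G a) := by
  -- |g(p^j)| ≤ 2 for j ≥ 1
  have habs : ∀ p j : ℕ, p.Prime → 1 ≤ j → |g (p ^ j)| ≤ 2 := by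
    intro p j hp hj
    rw [hg p j hp hj]
    have h1 : 1 ≤ p ^ j := Nat.one_le_pow _ _ hp.pos
    have h2' : 1 ≤ p ^ (j - 1) := Nat.one_le_pow _ _ hp.pos
    rcases hrange _ h1 with h | h <;> rcases hrange _ h2' with h' | h' <;>
      rw [h, h'] <;> norm_num
  -- g(p^k) = 0 or |g(p^k)| = 2
  have hsq : ∀ p k : ℕ, p.Prime → 1 ≤ k → g (p ^ k) = 0 ∨ |g (p ^ k)| = 2 := by
    intro p k hp hk
    rw [hg p k hp hk]
    have h1 : 1 ≤ p ^ k := Nat.one_le_pow _ _ hp.pos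
    have h2' : 1 ≤ p ^ (k - 1) := Nat.one_le_pow _ _ hp.pos
    rcases hrange _ h1 with h | h <;> rcases hrange _ h2' with h' | h' <;>
      rw [h, h'] <;> norm_num
  have main : ∀ p k : ℕ, p.Prime → 3 ≤ p →
      (k = 0 → 0 ≤ 1 + 2 * ∑' i : ℕ, g (p ^ (i + 1)) / (p : ℝ) ^ (i + 1)) ∧
      (1 ≤ k → 0 ≤ g (p ^ k) ^ 2 +
        2 * ∑' i : ℕ, g (p ^ k) * g (p ^ (k + i + 1)) / (p : ℝ) ^ (i + 1)) := by
    intro p k hp hp3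
    have hp3R : (3 : ℝ) ≤ (p : ℝ) := by exact_mod_cast hp3
    have hppos : (0 : ℝ) < (p : ℝ) := by linarith
    set r : ℝ := ((p : ℝ))⁻¹ with hr_def
    have hr0 : 0 ≤ r := by positivity
    have hr13 : r ≤ 3⁻¹ := inv_anti₀ (by norm_num) hp3R
    have hr1 : r < 1 := by
      have : (1 : ℝ) < (p : ℝ) := by linarith
      exact inv_lt_one_of_one_lt₀ this
    have h1r : (2 : ℝ) / 3 ≤ 1 - r := by
      have : r ≤ 1 / 3 := by rw [one_div]; exact hr13
      linarith
    have hqr : ∀ i : ℕ, ((p : ℝ) ^ (i + 1))⁻¹ = r ^ (i + 1) := by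
      intro i; rw [hr_def, inv_pow]
    constructor
    · -- k = 0 case
      intro _
      have hterm0 : ∀ i : ℕ, |g (p ^ (i + 1)) / (p : ℝ) ^ (i + 1)| ≤ 2 * r ^ (i + 1) := by
        intro i
        have hq : (0 : ℝ) < (p : ℝ) ^ (i + 1) := pow_pos hppos _
        rw [abs_div, abs_of_pos hq, div_eq_mul_inv, hqr]
        have hb := habs p (i + 1) hp (by omega)
        have := pow_nonneg hr0 (i + 1)
        nlinarith
      obtain ⟨hsum0, _⟩ := geo_aux hr0 hr1 hterm0
      by_cases hp3' : p = 3
      · -- p = 3 : first term vanishes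
        subst hp3'
        have hg3 : g (3 ^ 1) = 0 := by
          rw [hg 3 1 hp le_rfl]
          norm_num [hf3, hf1]
        have hshift := Summable.tsum_eq_zero_add hsum0
        have hterm1 : ∀ i : ℕ,
            |g (3 ^ (i + 1 + 1)) / ((3 : ℕ) : ℝ) ^ (i + 1 + 1)| ≤ (2 * r) * r ^ (i + 1) := by
          intro i
          have := hterm0 (i + 1)
          calc |g (3 ^ (i + 1 + 1)) / ((3 : ℕ) : ℝ) ^ (i + 1 + 1)| ≤ 2 * r ^ (i + 1 + 1) := this
            _ = (2 * r) * r ^ (i + 1) := by ring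
        obtain ⟨_, hbnd⟩ := geo_aux hr0 hr1 hterm1
        have hrval : r = 3⁻¹ := by rw [hr_def]; norm_num
        rw [hrval] at hbnd
        norm_num at hbnd
        have := abs_le.mp hbnd
        rw [hshift, hg3]
        push_cast at this ⊢
        linarith [this.1]
      · -- p ≥ 5
        have h4 : p ≠ 4 := by rintro rfl; exact absurd hp (by decide)
        have hp5 : 5 ≤ p := by omega
        have hp5R : (5 : ℝ) ≤ (p : ℝ) := by exact_mod_cast hp5
        have hr15 : r ≤ 5⁻¹ := inv_anti₀ (by norm_num) hp5R
        obtain ⟨_, hbnd⟩ := geo_aux hr0 hr1 hterm0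
        have hb2 : 2 * r / (1 - r) ≤ 1 / 2 := by
          rw [div_le_div_iff₀ (by linarith) (by norm_num)]
          linarith
        have := abs_le.mp hbnd
        linarith [this.1]
    · -- k ≥ 1 case
      intro hk1
      rcases hsq p k hp hk1 with hc0 | hc2
      · simp [hc0, tsum_zero]
      · have hterm : ∀ i : ℕ,
            |g (p ^ k) * g (p ^ (k + i + 1)) / (p : ℝ) ^ (i + 1)| ≤ 4 * r ^ (i + 1) := by
          intro i
          have hq : (0 : ℝ) < (p : ℝ) ^ (i + 1) := pow_pos hppos _
          rw [abs_div, abs_of_pos hq, div_eq_mul_inv, hqr, abs_mul]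
          have hb := habs p (k + i + 1) hp (by omega)
          have hrp := pow_nonneg hr0 (i + 1)
          rw [hc2]
          nlinarith [mul_le_mul_of_nonneg_right hb hrp]
        obtain ⟨_, hbnd⟩ := geo_aux hr0 hr1 hterm
        have hb2 : 4 * r / (1 - r) ≤ 2 := by
          rw [div_le_iff₀ (by linarith)]
          linarith
        have hS := abs_le.mp hbnd
        have hc4 : g (p ^ k) ^ 2 = 4 := by
          have := sq_abs (g (p ^ k))
          rw [hc2] at this
          linarith [this]
        rw [hc4]
        linarith [hS.1]
  refine ⟨main, ?_⟩
  intro a ha hodd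
  rw [hG]
  apply Finset.prod_nonneg
  intro p hpmem
  have hp : p.Prime := Nat.prime_of_mem_primeFactors hpmem
  have hpd : p ∣ a := Nat.dvd_of_mem_primeFactors hpmem
  have hp2 : p ≠ 2 := by
    rintro rfl
    exact (Nat.not_even_iff_odd.mpr hodd) (even_iff_two_dvd.mpr hpd)
  have hp3 : 3 ≤ p := by
    have := hp.two_le
    omega
  have hk1 : 1 ≤ a.factorization p := by
    have := (Nat.Prime.factorization_pos_of_dvd hp (by omega) hpd)
    omega
  exact (main p (a.factorization p) hp hp3).2 hk1
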